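/- Let m be an odd positive integer, p = (q_0, m q_1, …, m q_n), q = (q_0, …, q_n). For z, z' ∈ ℝ^{n+1}∖{0}: if there exists λ ∈ ℝ∖{0} with (λ^{q_0} z_0^m, λ^{q_1} z_1, …, λ^{q_n} z_n) = ((z'_0)^m, z'_1, …, z'_n), then there exists μ ∈ ℝ∖{0} with μ^{q_0} z_0 = z'_0 and μ^{m q_j} z_j = z'_j for j = 1,…,n. -/

import Mathlib

lemma odd_pow_surj (m : ℕ) (hm : 0 < m) (hmodd : Odd m) (l : ℝ) :
    ∃ mu : ℝ, mu ^ m = l := by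
  rcases le_or_gt 0 l with hl | hl
  · exact ⟨l ^ ((m : ℝ)⁻¹), Real.rpow_inv_natCast_pow hl hm.ne'⟩
  · refine ⟨-((-l) ^ ((m : ℝ)⁻¹)), ?_⟩
    rw [hmodd.neg_pow, Real.rpow_inv_natCast_pow (by linarith) hm.ne', neg_neg]

/-- Injectivity of the map `ℝP(q₀, m q₁, …, m qₙ) → ℝP(q₀, …, qₙ)` induced by
`(z₀, z₁, …, zₙ) ↦ (z₀^m, z₁, …, zₙ)`, when `m` is odd. -/
theorem real_power_map_injective_odd (n m : ℕ) (hm : 0 < m) (hmodd : Odd m)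
    (q : Fin (n + 1) → ℕ) (hq : ∀ i, 0 < q i)
    (z z' : Fin (n + 1) → ℝ) (hz : z ≠ 0) (hz' : z' ≠ 0)
    (h : ∃ l : ℝ, l ≠ 0 ∧ l ^ q 0 * (z 0) ^ m = (z' 0) ^ m ∧
      ∀ j, j ≠ 0 → l ^ q j * z j = z' j) :
    ∃ mu : ℝ, mu ≠ 0 ∧ mu ^ q 0 * z 0 = z' 0 ∧
      ∀ j, j ≠ 0 → mu ^ (m * q j) * z j = z' j := by
  obtain ⟨l, hl, h0, hj⟩ := h
  obtain ⟨mu, hmu⟩ := odd_pow_surj m hm hmodd l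
  have hmune : mu ≠ 0 := by
    rintro rfl
    simp [zero_pow hm.ne'] at hmu
    exact hl hmu.symm
  refine ⟨mu, hmune, ?_, fun j hjne => ?_⟩
  · apply hmodd.strictMono_pow (R := ℝ) |>.injective
    have : (mu ^ q 0 * z 0) ^ m = (z' 0) ^ m := by
      rw [mul_pow, ← pow_mul, mul_comm (q 0) m, pow_mul, hmu, h0]
    exact this
  · rw [pow_mul, hmu, hj j hjne]
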